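/- Assume R is irreducible. Let A be a subgroup of GL(V) mapping R into itself (hence preserving both Q and P), and assume that A contains a Coxeter element c of W and that the cyclic subgroup generated by c is normal in A. Then the homomorphism H^1(A, Q) → H^1(A, P) induced by the A-equivariant inclusion Q ↪ P is the zero map. -/

import Mathlib

open Module

/-- A finite, reduced, crystallographic root system spanning the `ℚ`-vector space `V`,
given together with its coroots (viewed as linear functionals via the pairing
`⟨·, α^∨⟩`). -/
structure RootSystemData (V : Type*) [AddCommGroup V] [Module ℚ V] where
  /-- The set of roots `R ⊆ V`. -/
  roots : Set V
  finite : roots.Finite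
  zero_not_mem : (0 : V) ∉ roots
  span_eq_top : Submodule.span ℚ roots = ⊤
  /-- The coroot pairing `x ↦ ⟨x, α^∨⟩`. -/
  coroot : V → (V →ₗ[ℚ] ℚ)
  coroot_self : ∀ α ∈ roots, coroot α α = 2
  /-- Each reflection `s_α : x ↦ x - ⟨x, α^∨⟩α` maps `R` into itself. -/
  reflection_mem : ∀ α ∈ roots, ∀ β ∈ roots, β - coroot α β • α ∈ roots
  /-- Crystallographic condition: `⟨β, α^∨⟩ ∈ ℤ` for all roots `α, β`. -/
  crystallographic : ∀ α ∈ roots, ∀ β ∈ roots, ∃ n : ℤ, coroot α β = (n : ℚ)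
  /-- Reduced: the only multiples of a root `α` which are roots are `±α`. -/
  reduced : ∀ α ∈ roots, ∀ t : ℚ, t • α ∈ roots → t = 1 ∨ t = -1

namespace RootSystemData

variable {V : Type*} [AddCommGroup V] [Module ℚ V] (RS : RootSystemData V)

/-- The reflection `s_α` in a root `α`, as a linear endomorphism of `V`. -/
def reflMap (α : V) : V →ₗ[ℚ] V :=
  LinearMap.id - LinearMap.smulRight (RS.coroot α) α

lemma reflMap_apply (α x : V) : RS.reflMap α x = x - RS.coroot α x • α := rfl

lemma reflMap_reflMap {α : V} (h2 : RS.coroot α α = 2) (x : V) :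
    RS.reflMap α (RS.reflMap α x) = x := by
  rw [reflMap_apply, reflMap_apply, map_sub, map_smul, smul_eq_mul, h2, sub_smul, mul_smul]
  have : (2 : ℚ) • α = α + α := two_smul ℚ α
  rw [this]
  rw [smul_add]
  abel

/-- The reflection `s_α` in a root `α`, as a linear automorphism of `V`. -/
def refl (α : V) (hα : α ∈ RS.roots) : V ≃ₗ[ℚ] V :=
  LinearEquiv.ofLinear (RS.reflMap α) (RS.reflMap α)
    (by ext x; exact RS.reflMap_reflMap (RS.coroot_self α hα) x)
    (by ext x; exact RS.reflMap_reflMap (RS.coroot_self α hα) x)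

/-- The Weyl group of the root system: the subgroup of `GL(V)` generated by the
reflections in the roots. -/
def weylGroup : Subgroup (V ≃ₗ[ℚ] V) :=
  Subgroup.closure {w | ∃ (α : V) (hα : α ∈ RS.roots), w = RS.refl α hα}

/-- A base (system of simple roots) of the root system: a linearly independent spanning
subset of `R` such that every root is a linear combination of base elements with integer
coefficients which are either all nonnegative or all nonpositive. -/
structure IsBase (Δ : Finset V) : Prop where
  subset : ↑Δ ⊆ RS.roots
  indep : LinearIndependent ℚ (fun x : (Δ : Set V) => (x : V))
  span_eq_top : Submodule.span ℚ (Δ : Set V) = ⊤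
  pos_or_neg : ∀ β ∈ RS.roots,
    (∃ f : V → ℕ, β = ∑ α ∈ Δ, (f α : ℚ) • α) ∨
    (∃ f : V → ℕ, β = -∑ α ∈ Δ, (f α : ℚ) • α)

/-- A Coxeter element of the Weyl group: a product of the reflections in the simple roots
of some base, each simple root occurring exactly once, in some order. -/
def IsCoxeterElement (c : V ≃ₗ[ℚ] V) : Prop :=
  ∃ (Δ : Finset V) (hΔ : RS.IsBase Δ) (l : List {x // x ∈ Δ}),
    l.Nodup ∧ (∀ α : {x // x ∈ Δ}, α ∈ l) ∧
    c = (l.map fun α => RS.refl α.1 (hΔ.subset α.2)).prod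

/-- Irreducibility of the root system: `R` admits no decomposition into two nonempty
mutually orthogonal subsets (orthogonality expressed via the coroot pairing). -/
def IsIrreducible : Prop :=
  ∀ R₁ R₂ : Set V, R₁ ∪ R₂ = RS.roots →
    (∀ α ∈ R₁, ∀ β ∈ R₂, RS.coroot α β = 0) → R₁ = ∅ ∨ R₂ = ∅

/-- The root lattice `Q`: the subgroup of `V` generated by the roots. -/
def rootLattice : AddSubgroup V := AddSubgroup.closure RS.roots

/-- The weight lattice `P = {x ∈ V : ⟨x, α^∨⟩ ∈ ℤ for every root α}`. -/
def weightLattice : AddSubgroup V where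
  carrier := {x : V | ∀ α ∈ RS.roots, ∃ n : ℤ, RS.coroot α x = (n : ℚ)}
  zero_mem' := fun α _ => ⟨0, by simp⟩
  add_mem' := by
    rintro x y hx hy α hα
    obtain ⟨n, hn⟩ := hx α hα
    obtain ⟨m, hm⟩ := hy α hα
    exact ⟨n + m, by rw [map_add, hn, hm]; push_cast; ring⟩
  neg_mem' := by
    rintro x hx α hα
    obtain ⟨n, hn⟩ := hx α hα
    exact ⟨-n, by rw [map_neg, hn]; push_cast; ring⟩


section Aux
variable {V : Type*} [AddCommGroup V] [Module ℚ V] (RS : RootSystemData V)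

lemma refl_apply (α : V) (hα : α ∈ RS.roots) (x : V) :
    RS.refl α hα x = x - RS.coroot α x • α := rfl

lemma refl_inv (α : V) (hα : α ∈ RS.roots) : (RS.refl α hα)⁻¹ = RS.refl α hα := by
  apply LinearEquiv.toLinearMap_injective
  ext x
  rfl

lemma refl_refl (α : V) (hα : α ∈ RS.roots) (x : V) :
    RS.refl α hα (RS.refl α hα x) = x :=
  RS.reflMap_reflMap (RS.coroot_self α hα) x

lemma refl_mem_weylGroup (α : V) (hα : α ∈ RS.roots) : RS.refl α hα ∈ RS.weylGroup :=
  Subgroup.subset_closure ⟨α, hα, rfl⟩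

lemma weyl_maps_roots {w : V ≃ₗ[ℚ] V} (hw : w ∈ RS.weylGroup) :
    (∀ β ∈ RS.roots, w β ∈ RS.roots) ∧ (∀ β ∈ RS.roots, w⁻¹ β ∈ RS.roots) := by
  refine Subgroup.closure_induction ?_ ?_ ?_ ?_ hw
  · rintro x ⟨α, hα, rfl⟩
    constructor
    · intro β hβ; exact RS.reflection_mem α hα β hβ
    · intro β hβ
      rw [RS.refl_inv]
      exact RS.reflection_mem α hα β hβ
  · exact ⟨fun β hβ => hβ, fun β hβ => hβ⟩
  · rintro x y hx hy ⟨hx1, hx2⟩ ⟨hy1, hy2⟩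
    constructor
    · intro β hβ; exact hx1 _ (hy1 β hβ)
    · intro β hβ
      rw [mul_inv_rev]
      exact hy2 _ (hx2 β hβ)
  · rintro x hx ⟨hx1, hx2⟩
    exact ⟨hx2, by simpa using hx1⟩

instance finite_weylGroup : Finite RS.weylGroup := by
  haveI := RS.finite.to_subtype
  let F : RS.weylGroup → (RS.roots → RS.roots) := fun w β =>
    ⟨w.1 β, (RS.weyl_maps_roots w.2).1 β β.2⟩
  have hinj : Function.Injective F := by
    intro w₁ w₂ h
    apply Subtype.ext
    apply LinearEquiv.toLinearMap_injective
    apply LinearMap.ext_on RS.span_eq_top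
    intro x hx
    exact congrArg Subtype.val (congrFun h ⟨x, hx⟩)
  exact Finite.of_injective F hinj

noncomputable local instance (RS : RootSystemData V) : Fintype RS.weylGroup :=
  Fintype.ofFinite _

variable [FiniteDimensional ℚ V]

/-- A `weylGroup`-invariant positive definite form. -/
noncomputable def bform (x y : V) : ℚ :=
  ∑ w : RS.weylGroup, ∑ i, (finBasis ℚ V).repr (w.1 x) i * (finBasis ℚ V).repr (w.1 y) i

lemma bform_symm (x y : V) : RS.bform x y = RS.bform y x := by
  simp [bform, mul_comm]

lemma bform_add_left (x x' y : V) :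
    RS.bform (x + x') y = RS.bform x y + RS.bform x' y := by
  simp [bform, map_add, Finsupp.add_apply, add_mul, Finset.sum_add_distrib]

lemma bform_smul_left (t : ℚ) (x y : V) :
    RS.bform (t • x) y = t * RS.bform x y := by
  simp [bform, map_smul, Finsupp.smul_apply, smul_eq_mul, mul_assoc, Finset.mul_sum]

lemma bform_sub_left (x x' y : V) :
    RS.bform (x - x') y = RS.bform x y - RS.bform x' y := by
  have h : x - x' + x' = x := by abel
  have := RS.bform_add_left (x - x') x' y
  rw [h] at this
  linarith

lemma bform_neg_right (x y : V) : RS.bform x (-y) = -RS.bform x y := by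
  rw [bform_symm, bform_symm RS x y]
  have := RS.bform_smul_left (-1) y x
  simpa using this

lemma bform_nonneg (x : V) : 0 ≤ RS.bform x x := by
  apply Finset.sum_nonneg
  intro w _
  apply Finset.sum_nonneg
  intro i _
  exact mul_self_nonneg _

lemma bform_eq_zero (x : V) (h : RS.bform x x = 0) : x = 0 := by
  have h1 : ∀ w ∈ (Finset.univ : Finset RS.weylGroup), (0:ℚ) ≤ ∑ i, (finBasis ℚ V).repr (w.1 x) i * (finBasis ℚ V).repr (w.1 x) i := by
    intro w _
    exact Finset.sum_nonneg fun i _ => mul_self_nonneg _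
  have h2 := (Finset.sum_eq_zero_iff_of_nonneg h1).1 h (1 : RS.weylGroup) (Finset.mem_univ _)
  have h3 : ∀ i ∈ Finset.univ, (0:ℚ) ≤ (finBasis ℚ V).repr ((1 : RS.weylGroup).1 x) i * (finBasis ℚ V).repr ((1 : RS.weylGroup).1 x) i :=
    fun i _ => mul_self_nonneg _
  have h4 := (Finset.sum_eq_zero_iff_of_nonneg h3).1 h2
  have h5 : (finBasis ℚ V).repr x = 0 := by
    ext i
    have := h4 i (Finset.mem_univ i)
    have h6 : (finBasis ℚ V).repr ((1 : RS.weylGroup).1 x) i = 0 := by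
      nlinarith [this]
    simpa using h6
  simpa using congrArg (finBasis ℚ V).repr.symm h5

lemma bform_pos (x : V) (hx : x ≠ 0) : 0 < RS.bform x x := by
  rcases lt_or_eq_of_le (RS.bform_nonneg x) with h | h
  · exact h
  · exact absurd (RS.bform_eq_zero x h.symm) hx

lemma bform_invariant {w : V ≃ₗ[ℚ] V} (hw : w ∈ RS.weylGroup) (x y : V) :
    RS.bform (w x) (w y) = RS.bform x y := by
  unfold bform
  exact Fintype.sum_equiv (Equiv.mulRight (⟨w, hw⟩ : RS.weylGroup)) _ _ (fun u => rfl)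

lemma coroot_mul_bform {α : V} (hα : α ∈ RS.roots) (x : V) :
    RS.coroot α x * RS.bform α α = 2 * RS.bform x α := by
  have hs := RS.bform_invariant (RS.refl_mem_weylGroup α hα) x α
  rw [RS.refl_apply α hα x, RS.refl_apply α hα α, RS.coroot_self α hα] at hs
  have h2 : α - (2:ℚ) • α = -α := by
    rw [two_smul]; abel
  rw [h2, RS.bform_neg_right, RS.bform_sub_left, RS.bform_smul_left] at hs
  linarith

lemma bform_root_pos {α : V} (hα : α ∈ RS.roots) : 0 < RS.bform α α :=
  RS.bform_pos α (fun h => RS.zero_not_mem (h ▸ hα))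

/-- If all simple coroot values vanish, the vector is zero. -/
lemma eq_zero_of_coroot_base_zero {S : Set V} (hS : S ⊆ RS.roots)
    (hspan : Submodule.span ℚ S = ⊤) (x : V) (h : ∀ α ∈ S, RS.coroot α x = 0) :
    x = 0 := by
  have hb : ∀ α ∈ S, RS.bform x α = 0 := by
    intro α hαS
    have := RS.coroot_mul_bform (hS hαS) x
    rw [h α hαS] at this
    have hpos := RS.bform_root_pos (hS hαS)
    nlinarith
  let U : Submodule ℚ V :=
    { carrier := {y | RS.bform x y = 0}
      add_mem' := by
        intro a b ha hb
        have : RS.bform x (a + b) = RS.bform x a + RS.bform x b := by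
          rw [RS.bform_symm, RS.bform_add_left, RS.bform_symm a, RS.bform_symm b]
        simp only [Set.mem_setOf_eq] at *
        rw [this, ha, hb, add_zero]
      zero_mem' := by
        have : RS.bform x (0 : V) = 0 := by
          have := RS.bform_smul_left (0:ℚ) 0 x
          rw [RS.bform_symm]
          simpa using this
        simpa using this
      smul_mem' := by
        intro t a ha
        have : RS.bform x (t • a) = t * RS.bform x a := by
          rw [RS.bform_symm, RS.bform_smul_left, RS.bform_symm a]
        simp only [Set.mem_setOf_eq] at *
        rw [this, ha, mul_zero] }
  have hU : ∀ y : V, RS.bform x y = 0 := by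
    intro y
    have : y ∈ U := by
      have : (⊤ : Submodule ℚ V) ≤ U := by
        rw [← hspan]
        exact Submodule.span_le.2 (fun α hαS => hb α hαS)
      exact this Submodule.mem_top
    exact this
  exact RS.bform_eq_zero x (hU x)

/-- Equivariance of coroots, via the invariant form. -/
lemma coroot_weyl_smul {w : V ≃ₗ[ℚ] V} (hw : w ∈ RS.weylGroup) {α : V} (hα : α ∈ RS.roots)
    (hwα : w α ∈ RS.roots) (x : V) :
    RS.coroot (w α) x = RS.coroot α (w⁻¹ x) := by
  have h1 := RS.coroot_mul_bform hwα x
  have h2 := RS.coroot_mul_bform hα (w⁻¹ x)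
  have h3 : RS.bform (w α) (w α) = RS.bform α α := RS.bform_invariant hw α α
  have h4 : RS.bform x (w α) = RS.bform (w⁻¹ x) α := by
    have := RS.bform_invariant hw (w⁻¹ x) α
    rw [show w (w⁻¹ x) = x from w.apply_symm_apply x] at this
    exact this
  have hpos := RS.bform_root_pos hα
  rw [h3, h4] at h1
  rw [← h2] at h1
  exact mul_right_cancel₀ (ne_of_gt hpos) h1

lemma bform_zero_left (y : V) : RS.bform 0 y = 0 := by
  have := RS.bform_smul_left 0 0 y
  simpa using this

lemma bform_sum_left {ι : Type*} (s : Finset ι) (c : ι → ℚ) (v : ι → V) (y : V) :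
    RS.bform (∑ i ∈ s, c i • v i) y = ∑ i ∈ s, c i * RS.bform (v i) y := by
  classical
  induction s using Finset.induction_on with
  | empty => simpa using RS.bform_zero_left y
  | insert _ _ hnotmem ih =>
    rw [Finset.sum_insert hnotmem, Finset.sum_insert hnotmem, RS.bform_add_left,
      RS.bform_smul_left, ih]

lemma base_coeff_unique {Δ : Finset V} (hΔ : RS.IsBase Δ) (g : V → ℚ)
    (h : ∑ α ∈ Δ, g α • α = 0) : ∀ α ∈ Δ, g α = 0 := by
  have hi := hΔ.indep
  rw [Fintype.linearIndependent_iff] at hi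
  intro α hα
  refine hi (fun i => g i) ?_ ⟨α, hα⟩
  rw [Finset.sum_finset_coe (fun α => g α • α) Δ]
  exact h

lemma root_eq_weyl_smul_base [FiniteDimensional ℚ V] {Δ : Finset V} (hΔ : RS.IsBase Δ) :
    ∀ γ ∈ RS.roots,
      ∃ w ∈ Subgroup.closure {g : V ≃ₗ[ℚ] V | ∃ α, ∃ hh : α ∈ Δ, g = RS.refl α (hΔ.subset hh)},
        ∃ α ∈ Δ, γ = w α := by
  classical
  set K := Subgroup.closure
      {g : V ≃ₗ[ℚ] V | ∃ α, ∃ hh : α ∈ Δ, g = RS.refl α (hΔ.subset hh)} with hK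
  have key : ∀ n : ℕ, ∀ γ ∈ RS.roots, ∀ f : V → ℕ,
      γ = ∑ α ∈ Δ, (f α : ℚ) • α → (∑ α ∈ Δ, f α) = n →
      ∃ w ∈ K, ∃ α ∈ Δ, γ = w α := by
    intro n
    induction n using Nat.strong_induction_on with
    | _ n ih =>
    intro γ hγ f hf hn
    have hγ0 : γ ≠ 0 := fun h => RS.zero_not_mem (h ▸ hγ)
    have hpos : 0 < RS.bform γ γ := RS.bform_pos γ hγ0
    have hexp : RS.bform γ γ = ∑ α ∈ Δ, (f α : ℚ) * RS.bform α γ := by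
      conv_lhs => rw [show RS.bform γ γ = RS.bform (∑ α ∈ Δ, (f α : ℚ) • α) γ by rw [← hf]]
      exact RS.bform_sum_left Δ _ _ γ
    have hex : ∃ α ∈ Δ, f α ≠ 0 ∧ 0 < RS.bform α γ := by
      by_contra hc
      push_neg at hc
      have hle : RS.bform γ γ ≤ 0 := by
        rw [hexp]
        apply Finset.sum_nonpos
        intro α hα
        rcases Nat.eq_zero_or_pos (f α) with h0 | h0
        · simp [h0]
        · exact mul_nonpos_of_nonneg_of_nonpos (by positivity) (hc α hα h0.ne')
      linarith
    obtain ⟨α, hαΔ, hfα, hbpos⟩ := hex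
    have hαR := hΔ.subset hαΔ
    by_cases hγα : γ = α
    · exact ⟨1, one_mem _, α, hαΔ, by simp [hγα]⟩
    have hkmul := RS.coroot_mul_bform hαR γ
    have hBsym : RS.bform γ α = RS.bform α γ := RS.bform_symm γ α
    have hkpos : 0 < RS.coroot α γ := by nlinarith [RS.bform_root_pos hαR]
    set δ := γ - RS.coroot α γ • α with hδdef
    have hδR : δ ∈ RS.roots := RS.reflection_mem α hαR γ hγ
    have hδγ : RS.refl α hαR δ = γ := by
      show RS.reflMap α (γ - RS.coroot α γ • α) = γ
      rw [show γ - RS.coroot α γ • α = RS.reflMap α γ from rfl]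
      exact RS.reflMap_reflMap (RS.coroot_self α hαR) γ
    rcases hΔ.pos_or_neg δ hδR with ⟨f', hf'⟩ | ⟨f', hf'⟩
    · -- δ positive
      have hzero : ∑ β ∈ Δ,
          ((f β : ℚ) - (f' β : ℚ) - (if β = α then RS.coroot α γ else 0)) • β = 0 := by
        simp only [sub_smul, ite_smul, zero_smul]
        rw [Finset.sum_sub_distrib, Finset.sum_sub_distrib, Finset.sum_ite_eq' Δ α
          (fun β => RS.coroot α γ • β), if_pos hαΔ, ← hf, ← hf', hδdef]
        abel
      have hco := RS.base_coeff_unique hΔ _ hzero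
      have hcoα := hco α hαΔ
      rw [if_pos rfl] at hcoα
      have hlt : f' α < f α := by
        have : (f' α : ℚ) < (f α : ℚ) := by linarith
        exact_mod_cast this
      have hsum_lt : ∑ β ∈ Δ, f' β < n := by
        rw [← hn]
        apply Finset.sum_lt_sum
        · intro β hβ
          by_cases hβα : β = α
          · subst hβα; exact le_of_lt hlt
          · have := hco β hβ
            simp only [if_neg hβα, sub_zero] at this
            have : f' β = f β := by exact_mod_cast (by linarith : (f' β : ℚ) = (f β : ℚ))
            exact le_of_eq this
        · exact ⟨α, hαΔ, hlt⟩
      obtain ⟨w, hwK, α', hα', hδeq⟩ := ih _ hsum_lt δ hδR f' hf' rfl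
      refine ⟨RS.refl α hαR * w,
        mul_mem (Subgroup.subset_closure ⟨α, hαΔ, rfl⟩) hwK, α', hα', ?_⟩
      rw [show (RS.refl α hαR * w) α' = RS.refl α hαR (w α') from rfl, ← hδeq, hδγ]
    · -- δ negative
      have hzero : ∑ β ∈ Δ,
          ((f β : ℚ) + (f' β : ℚ) - (if β = α then RS.coroot α γ else 0)) • β = 0 := by
        simp only [add_smul, sub_smul, ite_smul, zero_smul]
        rw [Finset.sum_sub_distrib, Finset.sum_add_distrib, Finset.sum_ite_eq' Δ α
          (fun β => RS.coroot α γ • β), if_pos hαΔ, ← hf]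
        rw [show (∑ β ∈ Δ, (f' β : ℚ) • β) = -δ from by rw [hf', neg_neg], hδdef]
        abel
      have hco := RS.base_coeff_unique hΔ _ hzero
      have hγeq : γ = (f α : ℚ) • α := by
        rw [hf]
        refine Finset.sum_eq_single_of_mem α hαΔ ?_
        intro β hβ hβα
        have hcoβ := hco β hβ
        rw [if_neg hβα] at hcoβ
        have h1 : (f β : ℚ) = 0 := by
          have h2 : (0:ℚ) ≤ (f β : ℚ) := by positivity
          have h3 : (0:ℚ) ≤ (f' β : ℚ) := by positivity
          linarith
        rw [h1, zero_smul]
      rcases RS.reduced α hαR (f α : ℚ) (by rw [← hγeq]; exact hγ) with h1 | h1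
      · rw [h1, one_smul] at hγeq
        exact absurd hγeq hγα
      · exfalso
        have h2 : (0:ℚ) ≤ (f α : ℚ) := by positivity
        rw [h1] at h2
        linarith
  intro γ hγ
  rcases hΔ.pos_or_neg γ hγ with ⟨f, hf⟩ | ⟨f, hf⟩
  · exact key _ γ hγ f hf rfl
  · have hnegγ : -γ ∈ RS.roots := by
      have hmem := RS.reflection_mem γ hγ γ hγ
      rw [RS.coroot_self γ hγ] at hmem
      rw [show γ - (2:ℚ) • γ = -γ from by rw [two_smul]; abel] at hmem
      exact hmem
    have hfneg : -γ = ∑ α ∈ Δ, (f α : ℚ) • α := by rw [hf, neg_neg]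
    obtain ⟨w, hwK, α', hα', heq⟩ := key _ (-γ) hnegγ f hfneg rfl
    refine ⟨w * RS.refl α' (hΔ.subset hα'),
      mul_mem hwK (Subgroup.subset_closure ⟨α', hα', rfl⟩), α', hα', ?_⟩
    have hre : RS.refl α' (hΔ.subset hα') α' = -α' := by
      rw [RS.refl_apply, RS.coroot_self α' (hΔ.subset hα')]
      rw [two_smul]; abel
    rw [show (w * RS.refl α' (hΔ.subset hα')) α' = w (RS.refl α' (hΔ.subset hα') α') from rfl,
      hre, map_neg, ← heq, neg_neg]

lemma mem_weightLattice_of_base {Δ : Finset V} (hΔ : RS.IsBase Δ) (x : V)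
    (h : ∀ α ∈ Δ, ∃ n : ℤ, RS.coroot α x = (n : ℚ)) : x ∈ RS.weightLattice := by
  classical
  set K := Subgroup.closure
      {g : V ≃ₗ[ℚ] V | ∃ α, ∃ hh : α ∈ Δ, g = RS.refl α (hΔ.subset hh)} with hK
  have hKW : K ≤ RS.weylGroup := by
    rw [hK]
    apply (Subgroup.closure_le _).2
    rintro g ⟨α, hh, rfl⟩
    exact RS.refl_mem_weylGroup _ _
  have hstab : ∀ w ∈ K,
      (∀ y, (∀ α ∈ Δ, ∃ n : ℤ, RS.coroot α y = (n:ℚ)) →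
        ∀ α ∈ Δ, ∃ n : ℤ, RS.coroot α (w y) = (n:ℚ)) ∧
      (∀ y, (∀ α ∈ Δ, ∃ n : ℤ, RS.coroot α y = (n:ℚ)) →
        ∀ α ∈ Δ, ∃ n : ℤ, RS.coroot α (w⁻¹ y) = (n:ℚ)) := by
    intro w hw
    refine Subgroup.closure_induction ?_ ?_ ?_ ?_ hw
    · rintro g ⟨β, hβ, rfl⟩
      have hfwd : ∀ y, (∀ α ∈ Δ, ∃ n : ℤ, RS.coroot α y = (n:ℚ)) →
          ∀ α ∈ Δ, ∃ n : ℤ, RS.coroot α (RS.refl β (hΔ.subset hβ) y) = (n:ℚ) := by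
        intro y hy α hα
        rw [RS.refl_apply]
        obtain ⟨n1, h1⟩ := hy α hα
        obtain ⟨n2, h2⟩ := hy β hβ
        obtain ⟨n3, h3⟩ := RS.crystallographic α (hΔ.subset hα) β (hΔ.subset hβ)
        refine ⟨n1 - n2 * n3, ?_⟩
        rw [map_sub, map_smul, smul_eq_mul, h1, h2, h3]
        push_cast
        ring
      refine ⟨hfwd, ?_⟩
      rw [RS.refl_inv]
      exact hfwd
    · constructor <;> · intro y hy α hα; simpa using hy α hα
    · rintro g g' _ _ ⟨hg1, hg2⟩ ⟨hg'1, hg'2⟩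
      constructor
      · intro y hy α hα
        have : (g * g') y = g (g' y) := rfl
        rw [this]
        exact hg1 (g' y) (hg'1 y hy) α hα
      · intro y hy α hα
        rw [mul_inv_rev]
        have : (g'⁻¹ * g⁻¹) y = g'⁻¹ (g⁻¹ y) := rfl
        rw [this]
        exact hg'2 (g⁻¹ y) (hg2 y hy) α hα
    · rintro g _ ⟨hg1, hg2⟩
      refine ⟨hg2, ?_⟩
      rw [inv_inv]
      exact hg1
  intro γ hγ
  obtain ⟨w, hwK, α, hαΔ, rfl⟩ := RS.root_eq_weyl_smul_base hΔ γ hγ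
  rw [RS.coroot_weyl_smul (hKW hwK) (hΔ.subset hαΔ) hγ x]
  exact (hstab w hwK).2 x h α hαΔ

end Aux

/-- Linear independence of a list of vectors, phrased recursively. -/
def ListInd : List V → Prop
  | [] => True
  | a :: t => a ∉ Submodule.span ℚ {y : V | y ∈ t} ∧ ListInd t

section Aux2
variable {V : Type*} [AddCommGroup V] [Module ℚ V] (RS : RootSystemData V)

/-- `Tsum L x = x - s_{a₁}(s_{a₂}(⋯ s_{aₙ} x)) ` expanded as telescoping sum. -/
def Tsum : List V → V → V
  | [], _ => 0
  | a :: t, x => RS.coroot a x • a + RS.reflMap a (Tsum t x)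

/-- Application of the product of the reflections along a list. -/
def rprod : List V → V → V
  | [], x => x
  | a :: t, x => RS.reflMap a (rprod t x)

@[simp] lemma Tsum_nil (x : V) : RS.Tsum [] x = 0 := rfl
lemma Tsum_cons (a : V) (t : List V) (x : V) :
    RS.Tsum (a :: t) x = RS.coroot a x • a + RS.reflMap a (RS.Tsum t x) := rfl
@[simp] lemma rprod_nil (x : V) : RS.rprod [] x = x := rfl
lemma rprod_cons (a : V) (t : List V) (x : V) :
    RS.rprod (a :: t) x = RS.reflMap a (RS.rprod t x) := rfl

lemma Tsum_eq (L : List V) (x : V) : RS.Tsum L x = x - RS.rprod L x := by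
  induction L with
  | nil => simp [Tsum, rprod]
  | cons a t ih =>
    rw [RS.Tsum_cons, RS.rprod_cons, ih, RS.reflMap_apply, RS.reflMap_apply, map_sub, sub_smul]
    abel

lemma Tsum_mem_span (L : List V) (x : V) :
    RS.Tsum L x ∈ Submodule.span ℚ {y : V | y ∈ L} := by
  induction L with
  | nil => simp [Tsum]
  | cons a t ih =>
    rw [RS.Tsum_cons]
    have ha : a ∈ Submodule.span ℚ {y : V | y ∈ a :: t} :=
      Submodule.subset_span (by simp)
    have hsub : Submodule.span ℚ {y : V | y ∈ t} ≤ Submodule.span ℚ {y : V | y ∈ a :: t} :=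
      Submodule.span_mono (fun y hy => by simp [Set.mem_setOf_eq] at *; exact Or.inr hy)
    refine Submodule.add_mem _ (Submodule.smul_mem _ _ ha) ?_
    rw [RS.reflMap_apply]
    exact Submodule.sub_mem _ (hsub ih) (Submodule.smul_mem _ _ ha)

lemma Tsum_zero (L : List V) (hroots : ∀ a ∈ L, a ∈ RS.roots) (hind : ListInd L) (x : V)
    (h : RS.Tsum L x = 0) : ∀ a ∈ L, RS.coroot a x = 0 := by
  induction L with
  | nil => intro a ha; exact absurd ha List.not_mem_nil
  | cons a t ih =>
    obtain ⟨hnot, hind'⟩ := hind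
    have ha : a ∈ RS.roots := hroots a List.mem_cons_self
    have hT : RS.coroot a x • a + RS.reflMap a (RS.Tsum t x) = 0 := by
      rw [← RS.Tsum_cons]; exact h
    have happ := congrArg (RS.reflMap a) hT
    rw [map_add, map_smul, RS.reflMap_reflMap (RS.coroot_self a ha), map_zero] at happ
    have hrefla : RS.reflMap a a = -a := by
      rw [RS.reflMap_apply, RS.coroot_self a ha, two_smul]
      abel
    rw [hrefla] at happ
    -- happ : coroot a x • (-a) + Tsum t x = 0
    have hTt : RS.Tsum t x = RS.coroot a x • a := by
      have : RS.coroot a x • (-a) + RS.Tsum t x = 0 := happ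
      rw [smul_neg] at this
      linear_combination (norm := abel) this
    have hc0 : RS.coroot a x = 0 := by
      by_contra hc
      have hmem : a ∈ Submodule.span ℚ {y : V | y ∈ t} := by
        have := RS.Tsum_mem_span t x
        rw [hTt] at this
        have h2 := Submodule.smul_mem _ (RS.coroot a x)⁻¹ this
        rw [smul_smul, inv_mul_cancel₀ hc, one_smul] at h2
        exact h2
      exact hnot hmem
    refine fun b hb => ?_
    rcases List.mem_cons.1 hb with rfl | hb'
    · exact hc0
    · have hTt0 : RS.Tsum t x = 0 := by rw [hTt, hc0, zero_smul]
      exact ih (fun y hy => hroots y (List.mem_cons_of_mem a hy)) hind' hTt0 b hb'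

/-- Decomposition of elements of the closure of an inserted set. -/
lemma closure_insert_decomp (S : Set V) (a : V) (q : V)
    (h : q ∈ AddSubgroup.closure (insert a S)) :
    ∃ (m : ℤ) (z : V), z ∈ AddSubgroup.closure S ∧ q = m • a + z := by
  refine AddSubgroup.closure_induction ?_ ?_ ?_ ?_ h
  · rintro y (rfl | hy)
    · exact ⟨1, 0, AddSubgroup.zero_mem _, by simp⟩
    · exact ⟨0, y, AddSubgroup.subset_closure hy, by simp⟩
  · exact ⟨0, 0, AddSubgroup.zero_mem _, by simp⟩
  · rintro y y' _ _ ⟨m, z, hz, rfl⟩ ⟨m', z', hz', rfl⟩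
    exact ⟨m + m', z + z', AddSubgroup.add_mem _ hz hz', by rw [add_smul]; abel⟩
  · rintro y _ ⟨m, z, hz, rfl⟩
    exact ⟨-m, -z, AddSubgroup.neg_mem _ hz, by rw [neg_smul]; abel⟩

lemma coroot_int_on_closure {α : V} (hα : α ∈ RS.roots) {S : Set V} (hS : S ⊆ RS.roots) :
    ∀ q ∈ AddSubgroup.closure S, ∃ n : ℤ, RS.coroot α q = (n : ℚ) := by
  intro q hq
  refine AddSubgroup.closure_induction ?_ ?_ ?_ ?_ hq
  · intro y hy
    exact RS.crystallographic α hα y (hS hy)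
  · exact ⟨0, by simp⟩
  · rintro y y' _ _ ⟨n, hn⟩ ⟨n', hn'⟩
    exact ⟨n + n', by rw [map_add, hn, hn']; push_cast; ring⟩
  · rintro y _ ⟨n, hn⟩
    exact ⟨-n, by rw [map_neg, hn]; push_cast; ring⟩

lemma Tsum_int (L : List V) (hroots : ∀ a ∈ L, a ∈ RS.roots) (hind : ListInd L) (x : V)
    (h : RS.Tsum L x ∈ AddSubgroup.closure {y : V | y ∈ L}) :
    ∀ a ∈ L, ∃ n : ℤ, RS.coroot a x = (n : ℚ) := by
  induction L with
  | nil => intro a ha; exact absurd ha List.not_mem_nil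
  | cons a t ih =>
    obtain ⟨hnot, hind'⟩ := hind
    have ha : a ∈ RS.roots := hroots a List.mem_cons_self
    have htroots : ∀ y ∈ t, y ∈ RS.roots := fun y hy => hroots y (List.mem_cons_of_mem a hy)
    have hset : {y : V | y ∈ a :: t} = insert a {y : V | y ∈ t} := by
      ext y; simp [List.mem_cons]
    rw [hset] at h
    obtain ⟨m, z, hz, hq⟩ := closure_insert_decomp _ a _ h
    -- Tsum (a::t) x = coroot a x • a + (Tsum t x - coroot a (Tsum t x) • a)
    have hT : RS.Tsum (a :: t) x
        = (RS.coroot a x - RS.coroot a (RS.Tsum t x)) • a + RS.Tsum t x := by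
      rw [RS.Tsum_cons, RS.reflMap_apply, sub_smul]
      abel
    rw [hT] at hq
    -- (coroot a x - coroot a (Tsum t x) - m) • a = z - Tsum t x
    have hkey : (RS.coroot a x - RS.coroot a (RS.Tsum t x) - (m : ℚ)) • a
        = z - RS.Tsum t x := by
      rw [sub_smul, eq_sub_iff_add_eq]
      have hz2 : (m : ℤ) • a = (m : ℚ) • a := (Int.cast_smul_eq_zsmul ℚ m a).symm
      rw [hz2] at hq
      linear_combination (norm := abel) hq
    have hzspan : z ∈ Submodule.span ℚ {y : V | y ∈ t} := by
      have : AddSubgroup.closure {y : V | y ∈ t} ≤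
          (Submodule.span ℚ {y : V | y ∈ t}).toAddSubgroup := by
        apply (AddSubgroup.closure_le _).2
        exact fun y hy => Submodule.subset_span hy
      exact this hz
    have hcoef : RS.coroot a x - RS.coroot a (RS.Tsum t x) - (m : ℚ) = 0 := by
      by_contra hc
      apply hnot
      have hmem : (RS.coroot a x - RS.coroot a (RS.Tsum t x) - (m : ℚ)) • a
          ∈ Submodule.span ℚ {y : V | y ∈ t} := by
        rw [hkey]
        exact Submodule.sub_mem _ hzspan (RS.Tsum_mem_span t x)
      have h2 := Submodule.smul_mem _ (RS.coroot a x - RS.coroot a (RS.Tsum t x) - (m : ℚ))⁻¹ hmem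
      rw [smul_smul, inv_mul_cancel₀ hc, one_smul] at h2
      exact h2
    have hTt : RS.Tsum t x = z := by
      have h0 := hkey
      rw [hcoef, zero_smul] at h0
      exact (eq_of_sub_eq_zero h0.symm).symm
    have hTz : RS.Tsum t x ∈ AddSubgroup.closure {y : V | y ∈ t} := by rw [hTt]; exact hz
    obtain ⟨n'', h''⟩ := RS.coroot_int_on_closure ha
      (S := {y : V | y ∈ t}) (fun y hy => htroots y hy) (RS.Tsum t x) hTz
    intro b hb
    rcases List.mem_cons.1 hb with rfl | hb'
    · refine ⟨m + n'', ?_⟩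
      rw [h''] at hcoef
      push_cast
      linarith
    · exact ih htroots hind' hTz b hb'

lemma rootLattice_eq_base {Δ : Finset V} (hΔ : RS.IsBase Δ) :
    RS.rootLattice = AddSubgroup.closure (Δ : Set V) := by
  apply le_antisymm
  · apply (AddSubgroup.closure_le _).2
    intro β hβ
    have hpos : ∀ f : V → ℕ, (∑ α ∈ Δ, (f α : ℚ) • α) ∈ AddSubgroup.closure (Δ : Set V) := by
      intro f
      refine AddSubgroup.sum_mem _ ?_
      intro α hα
      rw [Nat.cast_smul_eq_nsmul]
      exact AddSubgroup.nsmul_mem _ (AddSubgroup.subset_closure hα) _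
    rcases hΔ.pos_or_neg β hβ with ⟨f, hf⟩ | ⟨f, hf⟩
    · rw [hf]; exact hpos f
    · rw [hf]; exact AddSubgroup.neg_mem _ (hpos f)
  · apply (AddSubgroup.closure_le _).2
    intro α hα
    exact AddSubgroup.subset_closure (hΔ.subset hα)

lemma listInd_of_base {Δ : Finset V} (hΔ : RS.IsBase Δ) :
    ∀ L : List V, L.Nodup → (∀ a ∈ L, a ∈ Δ) → ListInd L := by
  intro L
  induction L with
  | nil => intro _ _; trivial
  | cons a t ih =>
    intro hnd hsub
    have hnd' := List.nodup_cons.1 hnd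
    refine ⟨?_, ih hnd'.2 (fun y hy => hsub y (List.mem_cons_of_mem _ hy))⟩
    have haΔ : a ∈ Δ := hsub a List.mem_cons_self
    have hnot := hΔ.indep.notMem_span_image
      (s := {i : (Δ : Set V) | (i : V) ≠ a}) (x := ⟨a, haΔ⟩) (by simp)
    intro hmem
    apply hnot
    have hsubset : {y : V | y ∈ t} ⊆
        (fun x : (Δ : Set V) => (x : V)) '' {i : (Δ : Set V) | (i : V) ≠ a} := by
      intro y hy
      have hyΔ : y ∈ Δ := hsub y (List.mem_cons_of_mem _ hy)
      have hya : y ≠ a := fun h => hnd'.1 (h ▸ hy)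
      exact ⟨⟨y, hyΔ⟩, hya, rfl⟩
    exact Submodule.span_mono hsubset hmem

lemma coxeter_prod_apply {Δ : Finset V} (hΔ : RS.IsBase Δ) (l : List {x // x ∈ Δ}) (x : V) :
    ((l.map fun α => RS.refl α.1 (hΔ.subset α.2)).prod) x = RS.rprod (l.map Subtype.val) x := by
  induction l with
  | nil => simp
  | cons a t ih =>
    rw [List.map_cons, List.prod_cons, List.map_cons, RS.rprod_cons, ← ih]
    rfl

end Aux2
end RootSystemData

/-- Assume the root system is irreducible. Let `A ≤ GL(V)` map the set of
roots into itself (hence preserve `Q` and `P`), contain a Coxeter element `c` of the Weyl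
group, and suppose the cyclic subgroup generated by `c` is normal in `A`.  Then the map
`H¹(A, Q) → H¹(A, P)` induced by the inclusion `Q ↪ P` is zero: every `1`-cocycle of `A`
with values in the root lattice `Q` becomes, with values in the weight lattice `P`, a
coboundary. -/
theorem RootSystemData.h1_rootLattice_to_weightLattice_trivial
    {V : Type*} [AddCommGroup V] [Module ℚ V] [FiniteDimensional ℚ V]
    (RS : RootSystemData V) (hirr : RS.IsIrreducible)
    (A : Subgroup (V ≃ₗ[ℚ] V))
    (hA : ∀ a ∈ A, ∀ α ∈ RS.roots, a α ∈ RS.roots)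
    (c : V ≃ₗ[ℚ] V) (hc : RS.IsCoxeterElement c) (hcA : c ∈ A)
    (hnormal : ∀ a ∈ A, a * c * a⁻¹ ∈ Subgroup.zpowers c)
    (f : A → V) (hfQ : ∀ a : A, f a ∈ RS.rootLattice)
    (hcoc : ∀ a b : A, f (a * b) = f a + (a : V ≃ₗ[ℚ] V) (f b)) :
    ∃ p ∈ RS.weightLattice, ∀ a : A, f a = (a : V ≃ₗ[ℚ] V) p - p := by
  classical
  obtain ⟨Δ, hΔ, l, hnd, hcomp, hceq⟩ := hc
  set L : List V := l.map Subtype.val with hL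
  have hLset : {y : V | y ∈ L} = (Δ : Set V) := by
    ext y
    constructor
    · intro hy
      simp only [hL, List.mem_map, Set.mem_setOf_eq] at hy
      obtain ⟨a, _, rfl⟩ := hy
      exact a.2
    · intro hy
      exact List.mem_map.2 ⟨⟨y, hy⟩, hcomp ⟨y, hy⟩, rfl⟩
  have hmemL : ∀ α ∈ Δ, α ∈ L := by
    intro α hα
    have : α ∈ {y : V | y ∈ L} := by rw [hLset]; exact hα
    exact this
  have hmemΔ : ∀ a ∈ L, a ∈ Δ := by
    intro a ha
    have : a ∈ {y : V | y ∈ L} := ha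
    rw [hLset] at this
    exact this
  have hLroots : ∀ a ∈ L, a ∈ RS.roots := fun a ha => hΔ.subset (hmemΔ a ha)
  have hLnd : L.Nodup := hnd.map Subtype.val_injective
  have hLind : ListInd L := RS.listInd_of_base hΔ L hLnd hmemΔ
  have hcap : ∀ x, c x = RS.rprod L x := by
    intro x
    rw [hceq]
    exact RS.coxeter_prod_apply hΔ l x
  have hker : ∀ x : V, x - c x = 0 → x = 0 := by
    intro x hx
    have hT : RS.Tsum L x = 0 := by rw [RS.Tsum_eq, ← hcap]; exact hx
    have hz := RS.Tsum_zero L hLroots hLind x hT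
    refine RS.eq_zero_of_coroot_base_zero (S := (Δ : Set V))
      (fun α hα => hΔ.subset hα) hΔ.span_eq_top x ?_
    intro α hα
    exact hz α (hmemL α hα)
  set M : V →ₗ[ℚ] V := LinearMap.id - (c : V →ₗ[ℚ] V) with hM
  have hMapp : ∀ x, M x = x - c x := by
    intro x
    simp [hM, LinearMap.sub_apply]
  have hMinj : Function.Injective M := by
    intro x y hxy
    rw [hMapp, hMapp] at hxy
    have h2 : (x - y) - c (x - y) = 0 := by
      calc (x - y) - c (x - y) = (x - c x) - (y - c y) := by rw [map_sub]; abel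
      _ = 0 := by rw [hxy, sub_self]
    exact sub_eq_zero.mp (hker _ h2)
  have hMsurj : Function.Surjective M := LinearMap.injective_iff_surjective.1 hMinj
  set cA : A := ⟨c, hcA⟩ with hcAdef
  obtain ⟨p, hp⟩ := hMsurj (-f cA)
  rw [hMapp] at hp
  have hfc : f cA = c p - p := by
    have h2 : f cA = -(p - c p) := by rw [hp, neg_neg]
    rw [h2, neg_sub]
  have hf1 : f 1 = 0 := by
    have h := hcoc 1 1
    rw [one_mul] at h
    have h1 : ((1 : A) : V ≃ₗ[ℚ] V) (f 1) = f 1 := rfl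
    rw [h1] at h
    exact (left_eq_add.1 h)
  set g : A → V := fun a => f a - ((a : V ≃ₗ[ℚ] V) p - p) with hg
  have hgcoc : ∀ a b : A, g (a * b) = g a + (a : V ≃ₗ[ℚ] V) (g b) := by
    intro a b
    simp only [hg]
    rw [hcoc a b]
    have hab : ((a * b : A) : V ≃ₗ[ℚ] V) p = (a : V ≃ₗ[ℚ] V) ((b : V ≃ₗ[ℚ] V) p) := rfl
    rw [hab, map_sub, map_sub]
    abel
  have hg1 : g 1 = 0 := by
    simp only [hg]
    rw [hf1]
    have h1 : ((1 : A) : V ≃ₗ[ℚ] V) p = p := rfl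
    rw [h1, sub_self, sub_zero]
  have hgc : g cA = 0 := by
    simp only [hg]
    rw [hfc]
    have : ((cA : A) : V ≃ₗ[ℚ] V) p = c p := rfl
    rw [this, sub_self]
  have hgcinv : g cA⁻¹ = 0 := by
    have h := hgcoc cA cA⁻¹
    rw [mul_inv_cancel, hg1, hgc, zero_add] at h
    have hc0 : (c : V ≃ₗ[ℚ] V) (g cA⁻¹) = c 0 := by rw [map_zero]; exact h.symm
    exact c.injective hc0
  have hmulz : ∀ a b : A, g a = 0 → g b = 0 → g (a * b) = 0 := by
    intro a b ha hb
    rw [hgcoc, ha, hb, map_zero, add_zero]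
  have hgz : ∀ k : ℤ, g (cA ^ k) = 0 := by
    intro k
    induction k using Int.induction_on with
    | zero => rw [zpow_zero]; exact hg1
    | succ n ih => rw [zpow_add_one]; exact hmulz _ _ ih hgc
    | pred n ih => rw [zpow_sub_one]; exact hmulz _ _ ih hgcinv
  have hgzero : ∀ a : A, g a = 0 := by
    intro a
    have hmem := hnormal (a : V ≃ₗ[ℚ] V) a.2
    rw [Subgroup.mem_zpowers_iff] at hmem
    obtain ⟨k, hk⟩ := hmem
    have hconjA : a * cA * a⁻¹ = cA ^ k := by
      apply Subtype.ext
      rw [SubgroupClass.coe_zpow]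
      exact hk.symm
    have h1 : a * cA = cA ^ k * a := by
      rw [← hconjA]
      group
    have e1 : g (a * cA) = g a := by rw [hgcoc, hgc, map_zero, add_zero]
    have e2 : g (cA ^ k * a) = ((cA ^ k : A) : V ≃ₗ[ℚ] V) (g a) := by
      rw [hgcoc, hgz k, zero_add]
    set aE : V ≃ₗ[ℚ] V := (a : V ≃ₗ[ℚ] V) with haE
    have e3 : g a = (aE * c * aE⁻¹) (g a) := by
      conv_lhs => rw [← e1, h1]
      rw [e2, SubgroupClass.coe_zpow, show ((cA : A) : V ≃ₗ[ℚ] V) = c from rfl, hk]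
    have e5 : aE.symm (g a) - c (aE.symm (g a)) = 0 := by
      have e4 := congrArg aE.symm e3
      have e6 : aE.symm ((aE * c * aE⁻¹) (g a)) = c (aE.symm (g a)) := by
        show aE.symm (aE (c (aE.symm (g a)))) = c (aE.symm (g a))
        exact aE.symm_apply_apply _
      rw [e6] at e4
      rw [← e4, sub_self]
    have hy0 := hker _ e5
    have hfin : g a = aE (aE.symm (g a)) := (aE.apply_symm_apply (g a)).symm
    rw [hfin, hy0, map_zero]
  have hTQ : RS.Tsum L p ∈ AddSubgroup.closure {y : V | y ∈ L} := by
    rw [RS.Tsum_eq, ← hcap]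
    have hpc : p - c p = -f cA := hp
    rw [hpc, hLset, ← RS.rootLattice_eq_base hΔ]
    exact AddSubgroup.neg_mem _ (hfQ cA)
  have hsimple := RS.Tsum_int L hLroots hLind p hTQ
  have hwt : p ∈ RS.weightLattice :=
    RS.mem_weightLattice_of_base hΔ p (fun α hα => hsimple α (hmemL α hα))
  refine ⟨p, hwt, ?_⟩
  intro a
  have h0 : f a - ((a : V ≃ₗ[ℚ] V) p - p) = 0 := hgzero a
  exact sub_eq_zero.mp h0
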